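/- Let L be a proper convex lsc selfdual Lagrangian on a reflexive Banach space X × X* such that for some x₀ ∈ X, the function p ↦ L(x₀,p) is bounded on bounded subsets of X*. Then for each p ∈ X* there exists x̄ ∈ X with L(x̄,p) − ⟨x̄,p⟩ = inf_{x ∈ X} (L(x,p) − ⟨x,p⟩) = 0, and hence p ∈ ∂̄L(x̄). -/

import Mathlib

open NormedSpace

/-- Legendre transform of a Lagrangian in both variables. -/
noncomputable def LagConj {X : Type*} [NormedAddCommGroup X] [NormedSpace ℝ X]
    (L : X × StrongDual ℝ X → EReal) (p : StrongDual ℝ X) (u : X) : EReal :=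
  ⨆ yq : X × StrongDual ℝ X, (((p yq.1) + (yq.2 u) : ℝ) : EReal) - L yq

set_option maxHeartbeats 2000000 in
/-- If `L` is a proper convex lsc selfdual Lagrangian such that for
some `x₀` the map `p ↦ L(x₀,p)` is bounded on bounded sets, then for each `p`
there is `xb` with `L(xb,p) − ⟨xb,p⟩ = inf_x (L(x,p) − ⟨x,p⟩) = 0`, i.e.
`L(xb,p) = ⟨xb,p⟩` and `L(x,p) ≥ ⟨x,p⟩` for all `x`; hence `p ∈ ∂̄L(xb)`. -/
theorem stmt4 {X : Type*} [NormedAddCommGroup X] [NormedSpace ℝ X] [CompleteSpace X]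
    (hrefl : Function.Surjective (NormedSpace.inclusionInDoubleDual ℝ X))
    (L : X × StrongDual ℝ X → EReal)
    (hproper : (∃ z, L z ≠ ⊤) ∧ ∀ z, L z ≠ ⊥)
    (hconv : ∀ a b : X × StrongDual ℝ X, ∀ t : ℝ, 0 ≤ t → t ≤ 1 →
      L (t • a + (1 - t) • b) ≤ (t : EReal) * L a + ((1 - t : ℝ) : EReal) * L b)
    (hlsc : LowerSemicontinuous L)
    (hself : ∀ x p, LagConj L p x = L (x, p))
    (x₀ : X) (hbdd : ∀ r : ℝ, ∃ C : ℝ, ∀ p : StrongDual ℝ X, ‖p‖ ≤ r → L (x₀, p) ≤ (C : EReal)) :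
    ∀ p : StrongDual ℝ X, ∃ xb : X,
      L (xb, p) = ((p xb : ℝ) : EReal) ∧ ∀ x : X, ((p x : ℝ) : EReal) ≤ L (x, p) := by
  -- Step 1 : Fenchel-Young inequality from selfduality
  have hge : ∀ (x : X) (q : StrongDual ℝ X), ((q x : ℝ) : EReal) ≤ L (x, q) := by
    intro x q
    have hle : (((q x) + (q x) : ℝ) : EReal) - L (x, q) ≤ LagConj L q x :=
      le_iSup (fun yq : X × StrongDual ℝ X => (((q yq.1) + (yq.2 x) : ℝ) : EReal) - L yq) (x, q)
    rw [hself x q] at hle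
    by_cases htop : L (x, q) = ⊤
    · rw [htop]; exact le_top
    · have hbot := hproper.2 (x, q)
      have hrepr : L (x, q) = ((L (x, q)).toReal : EReal) := (EReal.coe_toReal htop hbot).symm
      rw [hrepr] at hle ⊢
      rw [show ((((q x) + (q x) : ℝ)) : EReal) - ((L (x, q)).toReal : EReal)
          = (((q x) + (q x) - (L (x, q)).toReal : ℝ) : EReal) by norm_cast] at hle
      rw [EReal.coe_le_coe_iff] at hle ⊢
      linarith
  intro p
  obtain ⟨C, hC⟩ := hbdd (‖p‖ + 1)
  set S : Set ((StrongDual ℝ X) × ℝ) :=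
    {qt | ∃ x : X, L (x, p + qt.1) < ((p x + qt.2 : ℝ) : EReal)} with hS
  -- S is convex
  have hSconv : Convex ℝ S := by
    rintro ⟨q₁, t₁⟩ ⟨x₁, h₁⟩ ⟨q₂, t₂⟩ ⟨x₂, h₂⟩ a b ha hb hab
    refine ⟨a • x₁ + b • x₂, ?_⟩
    have hb' : b = 1 - a := by linarith
    subst hb'
    have hkey := hconv (x₁, p + q₁) (x₂, p + q₂) a ha (by linarith)
    have hq : p + (a • (q₁, t₁) + (1 - a) • (q₂, t₂)).1 = a • (p + q₁) + (1 - a) • (p + q₂) := by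
      simp only [Prod.fst_add, Prod.smul_fst]
      module
    have hpt : a • (x₁, p + q₁) + (1 - a) • (x₂, p + q₂)
        = (a • x₁ + (1 - a) • x₂, p + (a • (q₁, t₁) + (1 - a) • (q₂, t₂)).1) := by
      rw [hq]; rfl
    rw [hpt] at hkey
    simp only [Set.mem_setOf_eq] at h₁ h₂ ⊢
    -- extract real values
    have hbot₁ := hproper.2 (x₁, p + q₁)
    have hbot₂ := hproper.2 (x₂, p + q₂)
    have htop₁ : L (x₁, p + q₁) ≠ ⊤ := h₁.ne_top
    have htop₂ : L (x₂, p + q₂) ≠ ⊤ := h₂.ne_top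
    set l₁ := (L (x₁, p + q₁)).toReal with hl₁
    set l₂ := (L (x₂, p + q₂)).toReal with hl₂
    have he₁ : L (x₁, p + q₁) = (l₁ : EReal) := (EReal.coe_toReal htop₁ hbot₁).symm
    have he₂ : L (x₂, p + q₂) = (l₂ : EReal) := (EReal.coe_toReal htop₂ hbot₂).symm
    rw [he₁, he₂] at hkey
    rw [he₁, EReal.coe_lt_coe_iff] at h₁
    rw [he₂, EReal.coe_lt_coe_iff] at h₂
    have hrhs : (a : EReal) * (l₁ : EReal) + ((1 - a : ℝ) : EReal) * (l₂ : EReal)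
        = ((a * l₁ + (1 - a) * l₂ : ℝ) : EReal) := by norm_cast
    rw [hrhs] at hkey
    refine lt_of_le_of_lt hkey ?_
    rw [EReal.coe_lt_coe_iff]
    have hmap : p (a • x₁ + (1 - a) • x₂) = a * p x₁ + (1 - a) * p x₂ := by
      simp [map_add, map_smul]
    simp only [Prod.snd_add, Prod.smul_snd, smul_eq_mul]
    rw [hmap]
    rcases eq_or_lt_of_le ha with h0 | h0
    · rw [← h0]; simpa using h₂
    · have h1 := mul_lt_mul_of_pos_left h₁ h0
      have h2 := mul_le_mul_of_nonneg_left h₂.le hb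
      linarith
  -- nonempty interior
  set U : Set ((StrongDual ℝ X) × ℝ) := (Metric.ball (0 : StrongDual ℝ X) 1) ×ˢ (Set.Ioi (C - p x₀)) with hU
  have hUS : U ⊆ S := by
    rintro ⟨q, t⟩ ⟨hq, ht⟩
    refine ⟨x₀, ?_⟩
    have hnorm : ‖p + q‖ ≤ ‖p‖ + 1 := by
      refine (norm_add_le p q).trans ?_
      have : ‖q‖ < 1 := by simpa using hq
      linarith
    refine lt_of_le_of_lt (hC _ hnorm) ?_
    rw [EReal.coe_lt_coe_iff]
    simp only [Set.mem_Ioi] at ht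
    simp only
    linarith
  have hUopen : IsOpen U := (Metric.isOpen_ball).prod isOpen_Ioi
  have hUint : U ⊆ interior S := interior_maximal hUS hUopen
  set t₀ : ℝ := max 1 (C - p x₀ + 1) with ht₀
  have ht₀pos : 0 < t₀ := lt_of_lt_of_le one_pos (le_max_left _ _)
  have ht₀gt : C - p x₀ < t₀ := by
    have := le_max_right 1 (C - p x₀ + 1); linarith
  have huel : ((0 : StrongDual ℝ X), t₀) ∈ interior S :=
    hUint ⟨by simp, Set.mem_Ioi.mpr ht₀gt⟩
  -- (0,0) is not in S
  have h00 : ((0, 0) : (StrongDual ℝ X) × ℝ) ∉ interior S := by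
    intro h
    obtain ⟨x, hx⟩ := interior_subset h
    simp only [add_zero] at hx
    exact absurd (hge x p) (by simpa using not_le_of_gt hx)
  -- separation
  obtain ⟨f, hf⟩ := geometric_hahn_banach_open_point hSconv.interior isOpen_interior h00
  have hf0 : f ((0, 0) : (StrongDual ℝ X) × ℝ) = 0 := map_zero f
  rw [hf0] at hf
  -- extend separation to S
  have hfS : ∀ s ∈ S, f s ≤ 0 := by
    intro s hs
    by_contra hpos
    push_neg at hpos
    set u : (StrongDual ℝ X) × ℝ := ((0 : StrongDual ℝ X), t₀) with hu
    have hfu : f u < 0 := hf u huel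
    set ε : ℝ := f s / (f s - f u) with hε
    have hd : 0 < f s - f u := by linarith
    have h0 : 0 < ε := div_pos hpos hd
    have h1 : ε < 1 := by
      rw [hε, div_lt_one hd]; linarith
    have hmem := hSconv.combo_interior_self_mem_interior (a := ε) (b := 1 - ε) huel hs h0
      (by linarith) (by ring)
    have hval := hf _ hmem
    rw [map_add, map_smul, map_smul, smul_eq_mul, smul_eq_mul] at hval
    have h3 : ε * (f s - f u) = f s := div_mul_cancel₀ _ hd.ne'
    nlinarith [hval, h3]
  -- decompose f
  set α : ℝ := f ((0 : StrongDual ℝ X), (1 : ℝ)) with hα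
  set ξ : StrongDual ℝ (StrongDual ℝ X) := f.comp (ContinuousLinearMap.inl ℝ (StrongDual ℝ X) ℝ) with hξ
  have hdecomp : ∀ (q : StrongDual ℝ X) (t : ℝ), f (q, t) = ξ q + t * α := by
    intro q t
    have : (q, t) = ((q, 0) : (StrongDual ℝ X) × ℝ) + (t • ((0 : StrongDual ℝ X), (1 : ℝ))) := by
      simp [Prod.ext_iff]
    rw [this, map_add, map_smul, smul_eq_mul]
    rfl
  -- α < 0
  have hαneg : α < 0 := by
    have h := hf _ huel
    rw [hdecomp 0 t₀] at h
    have hz : ξ (0 : StrongDual ℝ X) = 0 := map_zero ξ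
    rw [hz, zero_add] at h
    by_contra hc
    push_neg at hc
    exact absurd h (not_lt.mpr (mul_nonneg ht₀pos.le hc))
  -- reflexivity: pull back the functional
  obtain ⟨xb, hxb⟩ := hrefl ((-α)⁻¹ • ξ)
  have hαne : (-α) ≠ 0 := by linarith
  have hxbq : ∀ q : StrongDual ℝ X, ξ q = (-α) * (q xb) := by
    intro q
    have := congrArg (fun g : StrongDual ℝ (StrongDual ℝ X) => g q) hxb
    simp only [ContinuousLinearMap.smul_apply, smul_eq_mul] at this
    rw [NormedSpace.dual_def] at this
    field_simp at this
    rw [this, neg_mul_neg, mul_comm]; exact (div_mul_cancel₀ _ hαneg.ne).symm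
  -- key inequality
  have hkey : ∀ (q : StrongDual ℝ X) (t : ℝ), (q, t) ∈ S → q xb ≤ t := by
    intro q t hqt
    have h := hfS _ hqt
    rw [hdecomp, hxbq] at h
    have hpos : (0:ℝ) < -α := by linarith
    have h2 : (-α) * (q xb) ≤ (-α) * t := by ring_nf at h ⊢; linarith
    exact le_of_mul_le_mul_left h2 hpos
  refine ⟨xb, ?_, fun x => hge x p⟩
  refine le_antisymm ?_ (hge xb p)
  rw [← hself xb p]
  apply iSup_le
  rintro ⟨y, q⟩
  simp only
  by_cases htop : L (y, q) = ⊤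
  · rw [htop]
    exact (by simp : ((p y + q xb : ℝ) : EReal) - ⊤ ≤ _)
  · have hbot := hproper.2 (y, q)
    set l := (L (y, q)).toReal with hl
    have he : L (y, q) = (l : EReal) := (EReal.coe_toReal htop hbot).symm
    rw [he]
    rw [show ((p y + q xb : ℝ) : EReal) - (l : EReal) = ((p y + q xb - l : ℝ) : EReal) by norm_cast]
    rw [EReal.coe_le_coe_iff]
    -- show (q - p) xb ≤ l - p y
    have hsub : ∀ t : ℝ, l - p y < t → (q - p) xb ≤ t := by
      intro t ht
      refine hkey (q - p) t ⟨y, ?_⟩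
      rw [show p + (q - p) = q by abel, he, EReal.coe_lt_coe_iff]
      simp only
      linarith
    have hfin : (q - p) xb ≤ l - p y := by
      by_contra hc
      push_neg at hc
      have := hsub ((l - p y + (q - p) xb) / 2) (by linarith)
      linarith
    rw [ContinuousLinearMap.sub_apply] at hfin
    linarith
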